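/- Let V be a discrete valuation ring with uniformizer t, let u ∈ V be a unit, let α₁ < ⋯ < α_m be natural numbers, and let r ∈ ℕ. Then (1 - u^{gcd(α₁,...,α_m)})·t^{rα_m} lies in the ideal of V generated by (1 - u^{α₁})t^{rα₁}, ..., (1 - u^{α_m})t^{rα_m}. -/

import Mathlib

lemma gcd_mem_addSubgroup {ι : Type*} (s : Finset ι) (f : ι → ℕ) (H : AddSubgroup ℤ)
    (h : ∀ i ∈ s, (f i : ℤ) ∈ H) : ((s.gcd f : ℕ) : ℤ) ∈ H := by
  classical
  induction s using Finset.induction_on with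
  | empty => simpa using H.zero_mem
  | @insert a s _ ih =>
    rw [Finset.gcd_insert]
    have h1 : ((f a : ℤ)) ∈ H := h a (Finset.mem_insert_self a s)
    have h2 : ((s.gcd f : ℕ) : ℤ) ∈ H := ih fun i hi => h i (Finset.mem_insert_of_mem hi)
    have hgcd : GCDMonoid.gcd (f a) (s.gcd f) = Nat.gcd (f a) (s.gcd f) := rfl
    rw [hgcd, Nat.gcd_eq_gcd_ab]
    exact H.add_mem
      (by simpa [mul_comm] using H.zsmul_mem h1 (Nat.gcdA (f a) (s.gcd f)))
      (by simpa [mul_comm] using H.zsmul_mem h2 (Nat.gcdB (f a) (s.gcd f)))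

theorem dvr_gcd_step (V : Type*) [CommRing V] [IsDomain V] [IsDiscreteValuationRing V]
    (t : V) (ht : Irreducible t) (u : V) (hu : IsUnit u)
    (m : ℕ) (hm : 0 < m) (α : Fin m → ℕ) (hα : StrictMono α) (r : ℕ) :
    (1 - u ^ (Finset.univ.gcd α)) * t ^ (r * α ⟨m - 1, by omega⟩) ∈
      Ideal.span (Set.range fun i => (1 - u ^ (α i)) * t ^ (r * α i)) := by
  set I := Ideal.span (Set.range fun i => (1 - u ^ (α i)) * t ^ (r * α i)) with hI
  set M : Fin m := ⟨m - 1, by omega⟩ with hM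
  have hle : ∀ i : Fin m, α i ≤ α M := by
    intro i
    exact hα.monotone (by simp [hM, Fin.le_def]; omega)
  rw [← Ideal.Quotient.eq_zero_iff_mem]
  set φ := Ideal.Quotient.mk I with hφ
  have hgen : ∀ i : Fin m, φ ((1 - u ^ α i) * t ^ (r * α M)) = 0 := by
    intro i
    have hrle : r * α i ≤ r * α M := Nat.mul_le_mul_left r (hle i)
    have heq : (1 - u ^ α i) * t ^ (r * α M)
        = ((1 - u ^ α i) * t ^ (r * α i)) * t ^ (r * α M - r * α i) := by
      rw [mul_assoc, ← pow_add]
      congr 2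
      omega
    rw [heq, map_mul]
    have : φ ((1 - u ^ α i) * t ^ (r * α i)) = 0 := by
      rw [Ideal.Quotient.eq_zero_iff_mem]
      exact Ideal.subset_span ⟨i, rfl⟩
    rw [this, zero_mul]
  have huq : IsUnit (φ u) := hu.map φ
  set w := huq.unit with hw
  set T : V ⧸ I := φ t ^ (r * α M) with hT
  have hgen' : ∀ i : Fin m, (φ u) ^ (α i) * T = T := by
    intro i
    have := hgen i
    rw [map_mul, map_sub, map_one, map_pow, map_pow, sub_mul, one_mul, sub_eq_zero] at this
    exact this.symm
  set H : AddSubgroup ℤ :=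
    { carrier := {n : ℤ | ((w ^ n : (V ⧸ I)ˣ) : V ⧸ I) * T = T}
      zero_mem' := by simp
      add_mem' := by
        intro a b ha hb
        simp only [Set.mem_setOf_eq] at *
        rw [zpow_add, Units.val_mul, mul_assoc, hb, ha]
      neg_mem' := by
        intro a ha
        simp only [Set.mem_setOf_eq] at *
        calc ((w ^ (-a) : (V ⧸ I)ˣ) : V ⧸ I) * T
            = ((w ^ (-a) : (V ⧸ I)ˣ) : V ⧸ I) * (((w ^ a : (V ⧸ I)ˣ) : V ⧸ I) * T) := by
              rw [ha]
          _ = ((w ^ (-a) * w ^ a : (V ⧸ I)ˣ) : V ⧸ I) * T := by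
              rw [Units.val_mul, mul_assoc]
          _ = T := by rw [← zpow_add, neg_add_cancel, zpow_zero, Units.val_one, one_mul] }
    with hH
  have hmem : ∀ i : Fin m, ((α i : ℕ) : ℤ) ∈ H := by
    intro i
    show ((w ^ ((α i : ℕ) : ℤ) : (V ⧸ I)ˣ) : V ⧸ I) * T = T
    rw [zpow_natCast]
    have : ((w ^ (α i) : (V ⧸ I)ˣ) : V ⧸ I) = (φ u) ^ (α i) := by
      rw [Units.val_pow_eq_pow_val, IsUnit.unit_spec]
    rw [this]
    exact hgen' i
  have hg : ((Finset.univ.gcd α : ℕ) : ℤ) ∈ H :=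
    gcd_mem_addSubgroup Finset.univ α H (fun i _ => hmem i)
  have hgT : (φ u) ^ (Finset.univ.gcd α) * T = T := by
    have : ((w ^ ((Finset.univ.gcd α : ℕ) : ℤ) : (V ⧸ I)ˣ) : V ⧸ I) * T = T := hg
    rwa [zpow_natCast, Units.val_pow_eq_pow_val, IsUnit.unit_spec] at this
  show φ ((1 - u ^ (Finset.univ.gcd α)) * t ^ (r * α M)) = 0
  rw [map_mul, map_sub, map_one, map_pow, map_pow, sub_mul, one_mul, ← hT, hgT, sub_self]
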